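/- arXiv:2311.13227 — 4 statements merged into one kernel-verified Lean document; each statement's English description precedes it below -/
import Mathlib

section
/- Let t, n be positive integers, let c_1, …, c_t > 0 satisfy ∑_{α=1}^t c_α = 1, let z_0, a_1, …, a_t be complex numbers with z_0 ≠ a_α for all α, set f_α = |z_0 − a_α|², let τ > 0 satisfy ∑_{α=1}^t c_α/f_α ≥ 1/τ, and let t_0 ≥ 0 satisfy ∑_{α=1}^t c_α/(f_α + t_0) = 1/τ. Then for every n×n complex positive semidefinite Hermitian matrix H one has ∑_{α=1}^t c_α · log det(f_α·I_n + H) − (1/τ)·Tr(H) ≤ n·(∑_{α=1}^t c_α · log(f_α + t_0) − t_0/τ), with equality if and only if H = t_0·I_n. -/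
open scoped BigOperators ComplexOrder

/-- key scalar inequality: log(f+x) ≤ log(f+t0) + (x-t0)/(f+t0), strict if x ≠ t0 -/
lemma key_log_le {f x t0 : ℝ} (hf : 0 < f) (hx : 0 ≤ x) (ht0 : 0 ≤ t0) :
    Real.log (f + x) ≤ Real.log (f + t0) + (x - t0) / (f + t0) := by
  have h1 : (0:ℝ) < f + x := by linarith
  have h2 : (0:ℝ) < f + t0 := by linarith
  have := Real.log_le_sub_one_of_pos (show 0 < (f+x)/(f+t0) by positivity)
  rw [Real.log_div h1.ne' h2.ne'] at this
  have : Real.log (f+x) - Real.log (f+t0) ≤ (f+x)/(f+t0) - 1 := this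
  have heq : (f+x)/(f+t0) - 1 = (x - t0)/(f+t0) := by field_simp; ring
  linarith [heq ▸ this]

lemma key_log_lt {f x t0 : ℝ} (hf : 0 < f) (hx : 0 ≤ x) (ht0 : 0 ≤ t0) (hne : x ≠ t0) :
    Real.log (f + x) < Real.log (f + t0) + (x - t0) / (f + t0) := by
  have h1 : (0:ℝ) < f + x := by linarith
  have h2 : (0:ℝ) < f + t0 := by linarith
  have hne1 : (f+x)/(f+t0) ≠ 1 := by
    intro h
    apply hne
    field_simp at h
    linarith
  have := Real.log_lt_sub_one_of_pos (show 0 < (f+x)/(f+t0) by positivity) hne1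
  rw [Real.log_div h1.ne' h2.ne'] at this
  have heq : (f+x)/(f+t0) - 1 = (x - t0)/(f+t0) := by field_simp; ring
  linarith [heq ▸ this]

/-- Lemma 2.5 (maximumY) of the paper: the function
`H ↦ ∑ c_α log det(f_α I + H) − (1/τ) Tr H` on positive semidefinite Hermitian
matrices attains its maximum only at `H = t₀ I`. -/
theorem stmt_0 (t n : ℕ) (ht : 0 < t) (hn : 0 < n)
    (c : Fin t → ℝ) (hc : ∀ α, 0 < c α) (hcsum : ∑ α, c α = 1)
    (z0 : ℂ) (a : Fin t → ℂ) (hza : ∀ α, z0 ≠ a α)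
    (f : Fin t → ℝ) (hf : ∀ α, f α = Complex.normSq (z0 - a α))
    (τ : ℝ) (hτ : 0 < τ) (hineq : 1 / τ ≤ ∑ α, c α / f α)
    (t0 : ℝ) (ht0 : 0 ≤ t0) (ht0eq : ∑ α, c α / (f α + t0) = 1 / τ)
    (L : Matrix (Fin n) (Fin n) ℂ → ℝ)
    (hL : ∀ H, L H =
      (∑ α, c α * Real.log (((f α : ℂ) • (1 : Matrix (Fin n) (Fin n) ℂ) + H).det.re))
        - (1 / τ) * H.trace.re)
    (R : ℝ)
    (hR : R = n * ((∑ α, c α * Real.log (f α + t0)) - t0 / τ)) :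
    ∀ H : Matrix (Fin n) (Fin n) ℂ, H.PosSemidef →
      L H ≤ R ∧ (L H = R ↔ H = (t0 : ℂ) • (1 : Matrix (Fin n) (Fin n) ℂ)) := by
  have hfpos : ∀ α, 0 < f α := fun α => by
    rw [hf α]; exact Complex.normSq_pos.2 (sub_ne_zero.2 (hza α))
  intro H hH
  have hHerm := hH.1
  set lam := hHerm.eigenvalues with hlam
  have hlampos : ∀ i, 0 ≤ lam i := hH.eigenvalues_nonneg
  set U : Matrix (Fin n) (Fin n) ℂ := (hHerm.eigenvectorUnitary : Matrix (Fin n) (Fin n) ℂ) with hU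
  have hUU : U * star U = 1 := (Matrix.mem_unitaryGroup_iff).mp hHerm.eigenvectorUnitary.2
  have hUU' : star U * U = 1 := (Matrix.mem_unitaryGroup_iff').mp hHerm.eigenvectorUnitary.2
  have hspec : H = U * Matrix.diagonal ((↑) ∘ lam) * star U := hHerm.spectral_theorem
  -- determinant formula
  have hdet : ∀ α, (((f α : ℂ) • (1 : Matrix (Fin n) (Fin n) ℂ) + H).det.re)
      = ∏ i, (f α + lam i) := by
    intro α
    have h1 : (f α : ℂ) • (1 : Matrix (Fin n) (Fin n) ℂ) + H
        = U * Matrix.diagonal (fun i => ((f α + lam i : ℝ) : ℂ)) * star U := by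
      rw [hspec]
      have : (f α : ℂ) • (1 : Matrix (Fin n) (Fin n) ℂ)
          = U * ((f α : ℂ) • (1 : Matrix (Fin n) (Fin n) ℂ)) * star U := by
        rw [Matrix.mul_smul, Matrix.mul_one, Matrix.smul_mul, hUU]
      rw [this, ← Matrix.add_mul, ← Matrix.mul_add]
      congr 1
      congr 1
      rw [Matrix.smul_one_eq_diagonal, Matrix.diagonal_add]
      congr 1
      ext i
      push_cast
      simp
    rw [h1, Matrix.det_mul, Matrix.det_mul, mul_comm, ← mul_assoc, ← Matrix.det_mul, hUU',
      Matrix.det_one, one_mul, Matrix.det_diagonal]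
    rw [show (∏ i, ((f α + lam i : ℝ) : ℂ)) = ((∏ i, (f α + lam i) : ℝ) : ℂ) by push_cast; ring]
    exact Complex.ofReal_re _
  -- trace formula
  have htr : H.trace.re = ∑ i, lam i := by
    rw [hspec, Matrix.trace_mul_cycle, hUU', Matrix.one_mul, Matrix.trace_diagonal,
      Complex.re_sum]
    simp [Function.comp]
  -- rewrite L H as sum over eigenvalues
  set g : ℝ → ℝ := fun x => (∑ α, c α * Real.log (f α + x)) - x / τ with hg
  have hLH : L H = ∑ i, g (lam i) := by
    rw [hL]
    have : ∀ α, Real.log (((f α : ℂ) • (1 : Matrix (Fin n) (Fin n) ℂ) + H).det.re)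
        = ∑ i, Real.log (f α + lam i) := by
      intro α
      rw [hdet α, Real.log_prod]
      intro i _
      have := hfpos α; have := hlampos i; positivity
    simp_rw [this, htr]
    simp_rw [Finset.mul_sum]
    rw [Finset.sum_comm, ← Finset.sum_sub_distrib]
    refine Finset.sum_congr rfl (fun i _ => ?_)
    simp only [hg]; ring
  have hRg : R = ∑ _i : Fin n, g t0 := by
    rw [hR, Finset.sum_const, Finset.card_univ, Fintype.card_fin, nsmul_eq_mul, hg]
  -- pointwise bound
  have hgle : ∀ x, 0 ≤ x → g x ≤ g t0 := by
    intro x hx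
    have key : ∀ α, c α * Real.log (f α + x)
        ≤ c α * Real.log (f α + t0) + c α * ((x - t0)/(f α + t0)) := by
      intro α
      have := key_log_le (hfpos α) hx ht0
      nlinarith [(hc α).le]
    have hsum : ∑ α, c α * Real.log (f α + x)
        ≤ ∑ α, (c α * Real.log (f α + t0) + c α * ((x - t0)/(f α + t0))) :=
      Finset.sum_le_sum (fun α _ => key α)
    have hcr : ∑ α, c α * ((x - t0)/(f α + t0)) = (x - t0) / τ := by
      have : ∑ α, c α * ((x - t0)/(f α + t0)) = (x - t0) * ∑ α, c α / (f α + t0) := by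
        rw [Finset.mul_sum]; congr 1; ext α; field_simp
      rw [this, ht0eq]; field_simp
    rw [Finset.sum_add_distrib, hcr] at hsum
    simp only [hg]
    have hxt : (x - t0)/τ = x/τ - t0/τ := by ring
    linarith [hsum, hxt]
  have hglt : ∀ x, 0 ≤ x → x ≠ t0 → g x < g t0 := by
    intro x hx hne
    have key : ∀ α, c α * Real.log (f α + x)
        < c α * Real.log (f α + t0) + c α * ((x - t0)/(f α + t0)) := by
      intro α
      have := key_log_lt (hfpos α) hx ht0 hne
      nlinarith [hc α]
    have : Nonempty (Fin t) := Fin.pos_iff_nonempty.mp ht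
    have hne' : (Finset.univ : Finset (Fin t)).Nonempty := Finset.univ_nonempty
    have hsum : ∑ α, c α * Real.log (f α + x)
        < ∑ α, (c α * Real.log (f α + t0) + c α * ((x - t0)/(f α + t0))) :=
      Finset.sum_lt_sum_of_nonempty hne' (fun α _ => key α)
    have hcr : ∑ α, c α * ((x - t0)/(f α + t0)) = (x - t0) / τ := by
      have : ∑ α, c α * ((x - t0)/(f α + t0)) = (x - t0) * ∑ α, c α / (f α + t0) := by
        rw [Finset.mul_sum]; congr 1; ext α; field_simp
      rw [this, ht0eq]; field_simp
    rw [Finset.sum_add_distrib, hcr] at hsum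
    simp only [hg]
    have hxt : (x - t0)/τ = x/τ - t0/τ := by ring
    linarith [hsum, hxt]
  -- main bound
  have hbound : L H ≤ R := by
    rw [hLH, hRg]
    exact Finset.sum_le_sum (fun i _ => hgle (lam i) (hlampos i))
  refine ⟨hbound, ?_, ?_⟩
  · -- equality → H = t0 • 1
    intro heq
    have hall : ∀ i, lam i = t0 := by
      by_contra hcon
      push_neg at hcon
      obtain ⟨j, hj⟩ := hcon
      have : ∑ i, g (lam i) < ∑ _i : Fin n, g t0 := by
        apply Finset.sum_lt_sum (fun i _ => hgle (lam i) (hlampos i))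
        exact ⟨j, Finset.mem_univ j, hglt (lam j) (hlampos j) hj⟩
      rw [← hLH, ← hRg] at this
      linarith [heq ▸ this]
    have hdiag : Matrix.diagonal ((↑) ∘ lam : Fin n → ℂ)
        = (t0 : ℂ) • (1 : Matrix (Fin n) (Fin n) ℂ) := by
      have hfun : ((↑) ∘ lam : Fin n → ℂ) = fun _ => (t0 : ℂ) := by
        funext i; simp [Function.comp, hall i]
      rw [Matrix.smul_one_eq_diagonal, hfun]
    rw [hspec, hdiag, Matrix.mul_smul, Matrix.mul_one, Matrix.smul_mul, hUU]
  · -- H = t0 • 1 → equality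
    intro heq
    have hdet0 : ∀ α, (((f α : ℂ) • (1 : Matrix (Fin n) (Fin n) ℂ) + H).det.re)
        = (f α + t0)^n := by
      intro α
      rw [heq, ← add_smul]
      rw [show ((f α : ℂ) + t0) • (1 : Matrix (Fin n) (Fin n) ℂ)
        = Matrix.diagonal (fun _ => ((f α + t0 : ℝ) : ℂ)) by
          rw [Matrix.smul_one_eq_diagonal]; congr 1; ext i; push_cast; ring]
      rw [Matrix.det_diagonal, Finset.prod_const, Finset.card_univ, Fintype.card_fin,
        ← Complex.ofReal_pow]
      exact Complex.ofReal_re _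
    have htr0 : H.trace.re = n * t0 := by
      rw [heq, Matrix.trace_smul, Matrix.trace_one]
      simp [Finset.card_univ, mul_comm]
    rw [hL, hR]
    simp_rw [hdet0, htr0]
    have hlog : ∀ α, Real.log ((f α + t0)^n) = n * Real.log (f α + t0) := fun α =>
      Real.log_pow _ n
    simp_rw [hlog]
    have : ∑ α, c α * (↑n * Real.log (f α + t0)) = ↑n * ∑ α, c α * Real.log (f α + t0) := by
      rw [Finset.mul_sum]; exact Finset.sum_congr rfl (fun α _ => by ring)
    rw [this]; ring
end

section
/- Let m be a positive integer, p a nonnegative integer, and c ≥ 0 a real number. Then ∫_{{v ∈ ℂ^m : ‖v‖² ≤ c}} (c − ‖v‖²)^p dv = π^m · (p!/(p+m)!) · c^{p+m}, where dv is Lebesgue measure on ℂ^m identified with ℝ^{2m} and ‖v‖² = ∑_{i=1}^m |v_i|². -/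
open MeasureTheory
open scoped BigOperators

open Finset

private lemma sum_alt_aux (p : ℕ) : ∀ m : ℕ,
    (∑ k ∈ Finset.range (p + 1), ((-1 : ℝ) ^ k * (p.choose k) / ((m : ℝ) + 1 + k)))
      = ((m.factorial : ℝ) * (p.factorial : ℝ)) / ((m + 1 + p).factorial : ℝ) := by
  induction p with
  | zero =>
      intro m
      have h : ((m : ℝ) + 1) ≠ 0 := by positivity
      simp [Nat.factorial_succ]
      field_simp
  | succ p ih =>
      intro m
      have key : (∑ k ∈ Finset.range (p + 1 + 1),
          ((-1 : ℝ) ^ k * (((p+1).choose k : ℕ) : ℝ) / ((m : ℝ) + 1 + k)))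
          = (∑ k ∈ Finset.range (p + 1), ((-1 : ℝ) ^ k * (p.choose k) / ((m : ℝ) + 1 + k)))
            - (∑ k ∈ Finset.range (p + 1),
                ((-1 : ℝ) ^ k * (p.choose k) / (((m + 1 : ℕ) : ℝ) + 1 + k))) := by
        rw [Finset.sum_range_succ'
          (fun k => ((-1 : ℝ) ^ k * (((p+1).choose k : ℕ) : ℝ) / ((m : ℝ) + 1 + k))) (p+1)]
        have h1 : ∀ k ∈ Finset.range (p + 1),
            ((-1 : ℝ) ^ (k+1) * (((p+1).choose (k+1) : ℕ) : ℝ) / ((m : ℝ) + 1 + ((k+1 : ℕ) : ℝ)))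
            = ((-1 : ℝ) ^ (k+1) * (p.choose (k+1)) / ((m : ℝ) + 1 + ((k+1 : ℕ) : ℝ)))
              - ((-1 : ℝ) ^ k * (p.choose k) / (((m + 1 : ℕ) : ℝ) + 1 + k)) := by
          intro k _
          have hc : ((p+1).choose (k+1) : ℝ) = (p.choose k : ℝ) + (p.choose (k+1) : ℝ) := by
            exact_mod_cast Nat.choose_succ_succ p k
          rw [hc]
          push_cast
          ring
        rw [Finset.sum_congr rfl h1, Finset.sum_sub_distrib]
        have h2 : (∑ k ∈ Finset.range (p + 1),
              ((-1 : ℝ) ^ (k+1) * (p.choose (k+1)) / ((m : ℝ) + 1 + ((k+1 : ℕ) : ℝ))))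
            + ((-1 : ℝ) ^ 0 * (p.choose 0) / ((m : ℝ) + 1 + ((0:ℕ) : ℝ)))
            = ∑ k ∈ Finset.range (p + 1), ((-1 : ℝ) ^ k * (p.choose k) / ((m : ℝ) + 1 + k)) := by
          rw [← Finset.sum_range_succ'
            (fun k => ((-1 : ℝ) ^ k * ((p.choose k : ℕ) : ℝ) / ((m : ℝ) + 1 + k))) (p+1),
            Finset.sum_range_succ]
          simp [Nat.choose_succ_self]
        have h0 : ((-1 : ℝ) ^ 0 * (((p+1).choose 0 : ℕ) : ℝ) / ((m : ℝ) + 1 + ((0:ℕ) : ℝ)))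
            = ((-1 : ℝ) ^ 0 * (p.choose 0) / ((m : ℝ) + 1 + ((0:ℕ) : ℝ))) := by
          norm_num
        rw [h0]
        linarith [h2]
      rw [key, ih m, ih (m + 1)]
      have e1 : ((m + 1 + (p+1)).factorial : ℝ)
          = ((m:ℝ) + 2 + p) * ((m + 1 + p).factorial : ℝ) := by
        have h : m + 1 + (p + 1) = (m + 1 + p) + 1 := by omega
        rw [h, Nat.factorial_succ]; push_cast; ring
      have e2 : ((m + 1 + 1 + p).factorial : ℝ)
          = ((m:ℝ) + 2 + p) * ((m + 1 + p).factorial : ℝ) := by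
        have h : m + 1 + 1 + p = (m + 1 + p) + 1 := by omega
        rw [h, Nat.factorial_succ]; push_cast; ring
      have e3 : ((m+1).factorial : ℝ) = ((m:ℝ) + 1) * (m.factorial : ℝ) := by
        rw [Nat.factorial_succ]; push_cast; ring
      have e4 : ((p+1).factorial : ℝ) = ((p:ℝ) + 1) * (p.factorial : ℝ) := by
        rw [Nat.factorial_succ]; push_cast; ring
      have hf : ((m + 1 + p).factorial : ℝ) ≠ 0 := by positivity
      have hd : ((m:ℝ) + 2 + p) ≠ 0 := by positivity
      rw [e1, e2, e3, e4]
      field_simp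
      ring

private lemma radial_aux (m' p : ℕ) (c : ℝ) (hc : 0 ≤ c) :
    (∫ y in Set.Ioc (0:ℝ) (Real.sqrt c), y ^ (2*(m'+1) - 1) * (c - y^2)^p)
      = ((m'.factorial : ℝ) * (p.factorial : ℝ) / (2 * ((m'+1+p).factorial : ℝ)))
          * c ^ (p + (m'+1)) := by
  rw [← intervalIntegral.integral_of_le (Real.sqrt_nonneg c)]
  have expand : ∀ y : ℝ, y ^ (2*(m'+1) - 1) * (c - y^2)^p
      = ∑ k ∈ range (p+1),
          ((-1:ℝ)^k * (p.choose k) * c^(p-k)) * y ^ (2*(m'+1) - 1 + 2*k) := by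
    intro y
    have h1 : (c - y^2 : ℝ) = (-(y^2)) + c := by ring
    rw [h1, add_pow, Finset.mul_sum]
    refine Finset.sum_congr rfl fun k hk => ?_
    rw [neg_pow, ← pow_mul, pow_add]
    ring
  rw [intervalIntegral.integral_congr (fun y _ => expand y)]
  rw [intervalIntegral.integral_finset_sum (fun k _ => by
    apply Continuous.intervalIntegrable; continuity)]
  have hterm : ∀ k ∈ range (p+1),
      (∫ y in (0:ℝ)..(Real.sqrt c), ((-1:ℝ)^k * (p.choose k) * c^(p-k)) * y ^ (2*(m'+1) - 1 + 2*k))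
      = ((-1:ℝ)^k * (p.choose k) / ((m' : ℝ) + 1 + k)) * (c ^ (p + (m'+1)) / 2) := by
    intro k hk
    rw [intervalIntegral.integral_const_mul, integral_pow]
    have he : 2*(m'+1) - 1 + 2*k + 1 = 2 * (m' + 1 + k) := by omega
    have hs : (Real.sqrt c) ^ (2*(m'+1) - 1 + 2*k + 1) = c ^ (m' + 1 + k) := by
      rw [he, pow_mul, Real.sq_sqrt hc]
    have hk' : k ≤ p := Nat.lt_succ_iff.mp (Finset.mem_range.mp hk)
    have hcc : c ^ (p - k) * c ^ (m' + 1 + k) = c ^ (p + (m'+1)) := by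
      rw [← pow_add]
      congr 1
      omega
    have hne : ((2*(m'+1) - 1 + 2*k : ℕ) : ℝ) + 1 = 2 * ((m' : ℝ) + 1 + k) := by
      have h9 : ((2*(m'+1) - 1 + 2*k : ℕ) : ℝ) + 1 = ((2*(m'+1) - 1 + 2*k + 1 : ℕ) : ℝ) := by
        push_cast; ring
      rw [h9, he]; push_cast; ring
    have h0 : (0:ℝ) ^ (2*(m'+1) - 1 + 2*k + 1) = 0 := zero_pow (by omega)
    rw [h0, sub_zero, hs, hne, ← hcc]
    have h2 : ((m' : ℝ) + 1 + k) ≠ 0 := by positivity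
    field_simp
  rw [Finset.sum_congr rfl hterm, ← Finset.sum_mul, sum_alt_aux]
  ring

set_option maxHeartbeats 1000000 in
/-- The ball integral `∫_{‖v‖² ≤ c} (c − ‖v‖²)^p dv = π^m p!/(p+m)! c^{p+m}`
over `ℂ^m`. -/
theorem stmt_4 (m : ℕ) (hm : 0 < m) (p : ℕ) (c : ℝ) (hc : 0 ≤ c) :
    (∫ v : Fin m → ℂ in {v | (∑ i, Complex.normSq (v i)) ≤ c},
        (c - ∑ i, Complex.normSq (v i)) ^ p)
      = Real.pi ^ m * ((p.factorial : ℝ) / ((p + m).factorial : ℝ)) * c ^ (p + m) := by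
  obtain ⟨m', rfl⟩ : ∃ m', m = m' + 1 := ⟨m - 1, by omega⟩
  set m := m' + 1 with hmdef
  haveI : Nonempty (Fin m) := ⟨⟨0, hm⟩⟩
  -- the measurable equivalence to Euclidean space
  let Temb : (Fin m → ℂ) ≃ᵐ EuclideanSpace ℝ (Fin m ⊕ Fin m) :=
    (MeasurableEquiv.piCongrRight fun _ => Complex.measurableEquivRealProd).trans
      ((MeasurableEquiv.arrowProdEquivProdArrow ℝ ℝ (Fin m)).trans
        (((MeasurableEquiv.sumPiEquivProdPi fun _ : Fin m ⊕ Fin m => ℝ).symm).trans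
          (MeasurableEquiv.toLp 2 (Fin m ⊕ Fin m → ℝ))))
  have hT : MeasurePreserving Temb volume volume := by
    exact ((MeasurePreserving.symm _
        (EuclideanSpace.volume_preserving_symm_measurableEquiv_toLp (Fin m ⊕ Fin m))).comp
      ((volume_measurePreserving_sumPiEquivProdPi_symm (fun _ : Fin m ⊕ Fin m => ℝ)).comp
        ((volume_measurePreserving_arrowProdEquivProdArrow ℝ ℝ (Fin m)).comp
          (volume_preserving_pi fun _ => Complex.volume_preserving_equiv_real_prod))))
  have hre : ∀ (v : Fin m → ℂ) (i : Fin m), (Temb v) (Sum.inl i) = (v i).re := fun _ _ => rfl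
  have him : ∀ (v : Fin m → ℂ) (i : Fin m), (Temb v) (Sum.inr i) = (v i).im := fun _ _ => rfl
  have hnorm : ∀ v : Fin m → ℂ, ∑ i, Complex.normSq (v i) = ‖Temb v‖^2 := by
    intro v
    rw [EuclideanSpace.norm_eq, Real.sq_sqrt (by positivity)]
    rw [Fintype.sum_sum_type]
    simp only [hre, him, Real.norm_eq_abs, sq_abs, Complex.normSq_apply]
    rw [← Finset.sum_add_distrib]
    exact Finset.sum_congr rfl fun i _ => by ring
  -- the radial profile function
  set f : ℝ → ℝ := Set.indicator {t : ℝ | t^2 ≤ c} (fun t => (c - t^2)^p) with hf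
  have hSmeas : MeasurableSet {v : Fin m → ℂ | (∑ i, Complex.normSq (v i)) ≤ c} := by
    apply measurableSet_le _ measurable_const
    exact Finset.measurable_sum _ fun i _ =>
      Complex.continuous_normSq.measurable.comp (measurable_pi_apply i)
  have step1 : (∫ v : Fin m → ℂ in {v | (∑ i, Complex.normSq (v i)) ≤ c},
        (c - ∑ i, Complex.normSq (v i)) ^ p)
      = ∫ v : Fin m → ℂ, f (‖Temb v‖) := by
    rw [← integral_indicator hSmeas]
    refine integral_congr_ae (Filter.Eventually.of_forall fun v => ?_)
    show _ = f ‖Temb v‖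
    by_cases h : (∑ i, Complex.normSq (v i)) ≤ c
    · have hv : v ∈ {v : Fin m → ℂ | (∑ i, Complex.normSq (v i)) ≤ c} := h
      have hv2 : ‖Temb v‖ ∈ {t : ℝ | t^2 ≤ c} := by
        show ‖Temb v‖^2 ≤ c
        rw [← hnorm v]; exact h
      rw [Set.indicator_of_mem hv, hf, Set.indicator_of_mem hv2, ← hnorm v]
    · have hv : v ∉ {v : Fin m → ℂ | (∑ i, Complex.normSq (v i)) ≤ c} := h
      have hv2 : ‖Temb v‖ ∉ {t : ℝ | t^2 ≤ c} := by
        show ¬ (‖Temb v‖^2 ≤ c)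
        rw [← hnorm v]; exact h
      rw [Set.indicator_of_notMem hv, hf, Set.indicator_of_notMem hv2]
  have step2 : (∫ v : Fin m → ℂ, f (‖Temb v‖))
      = ∫ x : EuclideanSpace ℝ (Fin m ⊕ Fin m), f ‖x‖ :=
    hT.integral_comp' (fun x => f ‖x‖)
  haveI : Nontrivial (EuclideanSpace ℝ (Fin m ⊕ Fin m)) :=
    Module.nontrivial_of_finrank_pos (R := ℝ) (by
      rw [finrank_euclideanSpace]
      simp [Fintype.card_sum]; omega)
  have hrank : Module.finrank ℝ (EuclideanSpace ℝ (Fin m ⊕ Fin m)) = 2 * m := by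
    rw [finrank_euclideanSpace]
    simp [Fintype.card_sum]
    omega
  have step3 : (∫ x : EuclideanSpace ℝ (Fin m ⊕ Fin m), f ‖x‖)
      = (2*m) • (volume (Metric.ball (0 : EuclideanSpace ℝ (Fin m ⊕ Fin m)) 1)).toReal
          • ∫ y in Set.Ioi (0:ℝ), y ^ (2*m - 1) • f y := by
    rw [integral_fun_norm_addHaar volume f, hrank]; rfl
  -- compute the radial integral
  have hAmeas : MeasurableSet {t : ℝ | t^2 ≤ c} :=
    measurableSet_le (measurable_id.pow_const 2) measurable_const
  have hinter : {t : ℝ | t^2 ≤ c} ∩ Set.Ioi (0:ℝ) = Set.Ioc (0:ℝ) (Real.sqrt c) := by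
    ext y
    simp only [Set.mem_inter_iff, Set.mem_setOf_eq, Set.mem_Ioi, Set.mem_Ioc]
    constructor
    · rintro ⟨h1, h2⟩
      exact ⟨h2, by nlinarith [Real.sq_sqrt hc, Real.sqrt_nonneg c]⟩
    · rintro ⟨h1, h2⟩
      exact ⟨by nlinarith [Real.sq_sqrt hc, Real.sqrt_nonneg c], h1⟩
  have step4 : (∫ y in Set.Ioi (0:ℝ), y ^ (2*m - 1) • f y)
      = ∫ y in Set.Ioc (0:ℝ) (Real.sqrt c), y ^ (2*m - 1) * (c - y^2)^p := by
    have : ∀ y : ℝ, y ^ (2*m - 1) • f y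
        = Set.indicator {t : ℝ | t^2 ≤ c} (fun y => y ^ (2*m - 1) * (c - y^2)^p) y := by
      intro y
      by_cases hy : y ∈ {t : ℝ | t^2 ≤ c}
      · rw [hf, Set.indicator_of_mem hy, Set.indicator_of_mem hy, smul_eq_mul]
      · rw [hf, Set.indicator_of_notMem hy, Set.indicator_of_notMem hy, smul_eq_mul, mul_zero]
    simp only [this]
    rw [setIntegral_indicator hAmeas]
    rw [Set.inter_comm, hinter]
  rw [step1, step2, step3, step4, radial_aux m' p c hc]
  -- compute the volume of the ball
  have hball : (volume (Metric.ball (0 : EuclideanSpace ℝ (Fin m ⊕ Fin m)) 1)).toReal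
      = Real.pi ^ m / (m.factorial : ℝ) := by
    rw [EuclideanSpace.volume_ball]
    have hcard : Fintype.card (Fin m ⊕ Fin m) = 2 * m := by
      simp [Fintype.card_sum]; omega
    rw [hcard]
    have hgamma : Real.Gamma (((2*m : ℕ) : ℝ) / 2 + 1) = (m.factorial : ℝ) := by
      have : ((2*m : ℕ) : ℝ) / 2 = (m : ℝ) := by push_cast; ring
      rw [this, Real.Gamma_nat_eq_factorial]
    have hpow : Real.sqrt Real.pi ^ (2*m) = Real.pi ^ m := by
      rw [pow_mul, Real.sq_sqrt Real.pi_nonneg]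
    rw [hgamma, hpow]
    rw [ENNReal.ofReal_one, one_pow, one_mul, ENNReal.toReal_ofReal]
    positivity
  rw [hball]
  -- final arithmetic
  have e3 : (m.factorial : ℝ) = ((m' : ℝ) + 1) * (m'.factorial : ℝ) := by
    rw [hmdef, Nat.factorial_succ]; push_cast; ring
  have e5 : ((p + m).factorial : ℝ) = ((m' + 1 + p).factorial : ℝ) := by
    have h9 : p + m = m' + 1 + p := by rw [hmdef]; omega
    rw [h9]
  have hfacne : ((m' + 1 + p).factorial : ℝ) ≠ 0 := by positivity
  have hfacne2 : (m'.factorial : ℝ) ≠ 0 := by positivity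
  have hm1 : ((m' : ℝ) + 1) ≠ 0 := by positivity
  rw [e5, nsmul_eq_mul, smul_eq_mul, e3, hmdef]
  push_cast
  field_simp
end

section
/- Let n be a positive integer, P_1 > 0 a real number, Γ an n×n real diagonal matrix, and G an n×n strictly upper-triangular complex matrix. If the Hermitian matrix Γ + √P_1·(G + G*) is negative semidefinite, then every diagonal entry of Γ is ≤ 0 and Tr(G G*) ≤ (1/P_1)·(Tr Γ)². -/
open Matrix
open scoped BigOperators ComplexOrder

/-- Inequality (3.100) of the paper: if `Γ + √P₁(G + G*)` is negative
semidefinite (with `Γ` real diagonal and `G` strictly upper triangular), then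
the diagonal entries of `Γ` are nonpositive and `Tr(G G*) ≤ (Tr Γ)²/P₁`. -/
theorem stmt_7 (n : ℕ) (hn : 0 < n) (P1 : ℝ) (hP1 : 0 < P1)
    (γ : Fin n → ℝ) (G : Matrix (Fin n) (Fin n) ℂ)
    (hG : ∀ i j : Fin n, ¬ i < j → G i j = 0)
    (hns : (-(Matrix.diagonal (fun i => (γ i : ℂ))
        + (Real.sqrt P1 : ℂ) • (G + Gᴴ))).PosSemidef) :
    (∀ i, γ i ≤ 0) ∧ (G * Gᴴ).trace.re ≤ (1 / P1) * (∑ i, γ i) ^ 2 := by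
  set A : Matrix (Fin n) (Fin n) ℂ :=
    -(Matrix.diagonal (fun i => (γ i : ℂ)) + (Real.sqrt P1 : ℂ) • (G + Gᴴ)) with hA
  have hGd : ∀ i : Fin n, G i i = 0 := fun i => hG i i (lt_irrefl i)
  have hAd : ∀ i : Fin n, A i i = ((-(γ i) : ℝ) : ℂ) := by
    intro i
    simp [hA, Matrix.neg_apply, Matrix.add_apply, Matrix.diagonal_apply_eq,
      Matrix.conjTranspose_apply, hGd i]
  have hAoff : ∀ i j : Fin n, i < j → A i j = -((Real.sqrt P1 : ℂ) * G i j) := by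
    intro i j hij
    simp [hA, Matrix.neg_apply, Matrix.add_apply, Matrix.diagonal_apply_ne _ hij.ne,
      Matrix.conjTranspose_apply, hG j i (by simpa using hij.le)]
  -- nonpositivity of diagonal entries
  have hγ : ∀ i, γ i ≤ 0 := by
    intro i
    have h := hns.dotProduct_mulVec_nonneg (Pi.single i 1)
    rw [← Pi.single_star, Matrix.mulVec_single, single_dotProduct] at h
    simp only [star_one, one_mul, mul_one, MulOpposite.op_one, one_smul, Matrix.col_apply, hAd i] at h
    have := Complex.zero_le_real.mp h
    linarith
  refine ⟨hγ, ?_⟩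
  -- quadratic form evaluated at `a • e_i + b • e_j`, for `i ≠ j`
  have hquad : ∀ (i j : Fin n), i ≠ j → ∀ a b : ℂ,
      0 ≤ star a * (A i i * a) + star a * (A i j * b)
        + (star b * (A j i * a) + star b * (A j j * b)) := by
    intro i j hij a b
    have h := hns.dotProduct_mulVec_nonneg (Pi.single i a + Pi.single j b)
    rw [star_add, ← Pi.single_star, ← Pi.single_star, Matrix.mulVec_add,
      Matrix.mulVec_single, Matrix.mulVec_single, add_dotProduct,
      dotProduct_add, dotProduct_add, single_dotProduct,
      single_dotProduct, single_dotProduct, single_dotProduct] at h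
    simpa [Pi.add_apply, Pi.single_apply, hij, hij.symm, mul_add] using h
  -- key two-by-two inequality
  have key : ∀ i j : Fin n, i < j → P1 * Complex.normSq (G i j) ≤ γ i * γ j := by
    intro i j hij
    set c : ℂ := A i j with hc
    have hji : A j i = star c := by
      rw [hc]
      nth_rewrite 1 [← hns.1]
      rw [Matrix.conjTranspose_apply]
    have hN : Complex.normSq c = P1 * Complex.normSq (G i j) := by
      rw [hc, hAoff i j hij]
      simp [Complex.normSq_mul, Complex.normSq_neg, Complex.normSq_ofReal,
        Real.mul_self_sqrt hP1.le]
    set N : ℝ := Complex.normSq c with hNdef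
    set di : ℝ := -γ i with hdi
    set dj : ℝ := -γ j with hdj
    -- quadratic in t is nonnegative
    have hq : ∀ t : ℝ, 0 ≤ di * (t * t) + (-2 * N) * t + dj * N := by
      intro t
      have h := hquad i j hij.ne (t : ℂ) (-(starRingEnd ℂ) c)
      rw [hAd i, hAd j, hji] at h
      have heq : star (t : ℂ) * (((-(γ i) : ℝ) : ℂ) * t)
            + star (t : ℂ) * (c * -(starRingEnd ℂ) c)
            + (star (-(starRingEnd ℂ) c) * (star c * t)
              + star (-(starRingEnd ℂ) c) * (((-(γ j) : ℝ) : ℂ) * -(starRingEnd ℂ) c))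
          = ((di * (t * t) + (-2 * N) * t + dj * N : ℝ) : ℂ) := by
        simp only [Complex.star_def, map_neg, Complex.conj_conj, Complex.conj_ofReal,
          hdi, hdj, hNdef]
        push_cast
        linear_combination ((-(γ j) : ℂ) - 2 * (t : ℂ)) * Complex.mul_conj c
      rw [heq] at h
      exact Complex.zero_le_real.mp h
    have hdisc := discrim_le_zero hq
    rw [discrim] at hdisc
    -- hdisc : (-2*N)^2 - 4*di*(dj*N) ≤ 0
    have hN0 : 0 ≤ N := Complex.normSq_nonneg c
    have hdidj : γ i * γ j = di * dj := by rw [hdi, hdj]; ring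
    rw [hdidj, ← hN]
    rcases eq_or_lt_of_le hN0 with h0 | h0
    · rw [← h0]
      exact mul_nonneg (by linarith [hγ i]) (by linarith [hγ j])
    · nlinarith
  -- trace computation
  have htr : (G * Gᴴ).trace.re = ∑ i, ∑ j, Complex.normSq (G i j) := by
    rw [Matrix.trace, Complex.re_sum]
    refine Finset.sum_congr rfl fun i _ => ?_
    rw [Matrix.diag_apply, Matrix.mul_apply, Complex.re_sum]
    refine Finset.sum_congr rfl fun j _ => ?_
    rw [Matrix.conjTranspose_apply, Complex.star_def, Complex.mul_conj, Complex.ofReal_re]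
  rw [htr]
  have hterm : ∀ i j : Fin n, P1 * Complex.normSq (G i j) ≤ γ i * γ j := by
    intro i j
    rcases lt_or_ge i j with h | h
    · exact key i j h
    · rw [hG i j (not_lt.mpr h)]
      simp only [Complex.normSq_zero, mul_zero]
      nlinarith [hγ i, hγ j]
  have hsum : P1 * ∑ i, ∑ j, Complex.normSq (G i j) ≤ (∑ i, γ i) ^ 2 := by
    calc P1 * ∑ i, ∑ j, Complex.normSq (G i j)
        = ∑ i, ∑ j, P1 * Complex.normSq (G i j) := by
          rw [Finset.mul_sum]; exact Finset.sum_congr rfl fun i _ => Finset.mul_sum _ _ _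
      _ ≤ ∑ i, ∑ j, γ i * γ j :=
          Finset.sum_le_sum fun i _ => Finset.sum_le_sum fun j _ => hterm i j
      _ = (∑ i, γ i) ^ 2 := by rw [sq, Finset.sum_mul_sum]
  have h2 : 0 ≤ ∑ i, ∑ j, Complex.normSq (G i j) :=
    Finset.sum_nonneg fun i _ => Finset.sum_nonneg fun j _ => Complex.normSq_nonneg _
  rw [one_div, inv_mul_eq_div]
  exact (le_div_iff₀ hP1).mpr (by linarith)
end

section
/- Let n be a positive integer, χ ∈ ℂ, Ẑ = diag(ẑ_1, …, ẑ_n) an n×n complex diagonal matrix, and Y, T arbitrary n×n complex matrices. Define the n²×n² matrices F_{1,1} = −conjugate(χ)·Ẑ² ⊗ I_n − Ẑ ⊗ ( conjugate(χ)·Ẑ + Ẑ* + T* + conjugate(χ)·T ), F_{1,2} = Y* ⊗ ( χ·(Ẑ* + T*) + (Ẑ + T) ), and K_{1,1} = −I_n ⊗ ( conjugate(χ)·(Ẑ + T) + Ẑ* + T* ) − conjugate(χ)·Ẑ ⊗ I_n, and define the 2n²×2n² block matrix h = [[ (Y*Y) ⊗ I_n + F_{1,1} , F_{1,2} + (Ẑ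 Y* + χ Y* Ẑ*) ⊗ I_n ], [ −F_{1,2}* − (Ẑ* Y + conjugate(χ)·Y Ẑ) ⊗ I_n , (Y Y*) ⊗ I_n + F_{1,1}* ]]. Then h equals the product of block matrices [[ Ẑ ⊗ I_n , −Y* ⊗ I_n ], [ Y ⊗ I_n , Ẑ* ⊗ I_n ]] · [[ K_{1,1} , Y* ⊗ I_n ], [ −Y ⊗ I_n , K_{1,1}* ]]; consequently det(h) = ( det [[ Ẑ , −Y* ], [ Y , Ẑ* ]] )^{n} · det [[ K_{1,1} , Y* ⊗ I_n ], [ −Y ⊗ I_n , K_{1,1}* ]]. -/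
open Matrix
open scoped Kronecker

private lemma neg_kron {n : ℕ} (A B : Matrix (Fin n) (Fin n) ℂ) :
    (-A) ⊗ₖ B = -(A ⊗ₖ B) := by
  ext ⟨i1, i2⟩ ⟨j1, j2⟩
  simp [Matrix.kroneckerMap_apply]

private lemma kron_neg {n : ℕ} (A B : Matrix (Fin n) (Fin n) ℂ) :
    A ⊗ₖ (-B) = -(A ⊗ₖ B) := by
  ext ⟨i1, i2⟩ ⟨j1, j2⟩
  simp [Matrix.kroneckerMap_apply]

private lemma conjT_kron {n : ℕ} (A B : Matrix (Fin n) (Fin n) ℂ) :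
    (A ⊗ₖ B)ᴴ = Aᴴ ⊗ₖ Bᴴ := by
  ext ⟨i1, i2⟩ ⟨j1, j2⟩
  simp [Matrix.kroneckerMap_apply, Matrix.conjTranspose_apply, mul_comm]

private lemma kron_blocks_eq {n : ℕ} (A B C D : Matrix (Fin n) (Fin n) ℂ) :
    Matrix.fromBlocks (A ⊗ₖ (1 : Matrix (Fin n) (Fin n) ℂ))
      (B ⊗ₖ (1 : Matrix (Fin n) (Fin n) ℂ)) (C ⊗ₖ (1 : Matrix (Fin n) (Fin n) ℂ))
      (D ⊗ₖ (1 : Matrix (Fin n) (Fin n) ℂ))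
      = ((Matrix.fromBlocks A B C D) ⊗ₖ (1 : Matrix (Fin n) (Fin n) ℂ)).submatrix
          (Equiv.sumProdDistrib (Fin n) (Fin n) (Fin n)).symm
          (Equiv.sumProdDistrib (Fin n) (Fin n) (Fin n)).symm := by
  ext i j
  rcases i with ⟨i1, i2⟩ | ⟨i1, i2⟩ <;> rcases j with ⟨j1, j2⟩ | ⟨j1, j2⟩ <;>
    simp [Matrix.kroneckerMap_apply, Equiv.sumProdDistrib]

private lemma det_fromBlocks_kron {n : ℕ} (A B C D : Matrix (Fin n) (Fin n) ℂ) :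
    (Matrix.fromBlocks (A ⊗ₖ (1 : Matrix (Fin n) (Fin n) ℂ))
      (B ⊗ₖ (1 : Matrix (Fin n) (Fin n) ℂ)) (C ⊗ₖ (1 : Matrix (Fin n) (Fin n) ℂ))
      (D ⊗ₖ (1 : Matrix (Fin n) (Fin n) ℂ))).det
      = (Matrix.fromBlocks A B C D).det ^ n := by
  rw [kron_blocks_eq A B C D, Matrix.det_submatrix_equiv_self, Matrix.det_kronecker,
    Matrix.det_one, one_pow, mul_one, Fintype.card_fin]

/-- Remark 1.5 of the paper: with `W = 0`, the matrix `h(0, T, Y)` factors as a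
product of two block matrices, and consequently its determinant is
`(det [[Ẑ, −Y*], [Y, Ẑ*]])ⁿ · det [[K₁₁, Y*⊗I], [−Y⊗I, K₁₁*]]`. -/
theorem stmt_17 (n : ℕ) (hn : 0 < n) (χ : ℂ) (zh : Fin n → ℂ)
    (Y T : Matrix (Fin n) (Fin n) ℂ)
    (Z : Matrix (Fin n) (Fin n) ℂ) (hZ : Z = Matrix.diagonal zh)
    (F11 F12 K11 : Matrix (Fin n × Fin n) (Fin n × Fin n) ℂ)
    (hF11 : F11 = -((starRingEnd ℂ χ) • ((Z ^ 2) ⊗ₖ (1 : Matrix (Fin n) (Fin n) ℂ)))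
        - Z ⊗ₖ ((starRingEnd ℂ χ) • Z + Zᴴ + Tᴴ + (starRingEnd ℂ χ) • T))
    (hF12 : F12 = Yᴴ ⊗ₖ (χ • (Zᴴ + Tᴴ) + (Z + T)))
    (hK11 : K11 = -((1 : Matrix (Fin n) (Fin n) ℂ)
          ⊗ₖ ((starRingEnd ℂ χ) • (Z + T) + Zᴴ + Tᴴ))
        - (starRingEnd ℂ χ) • (Z ⊗ₖ (1 : Matrix (Fin n) (Fin n) ℂ)))
    (h : Matrix ((Fin n × Fin n) ⊕ (Fin n × Fin n))
        ((Fin n × Fin n) ⊕ (Fin n × Fin n)) ℂ)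
    (hh : h = Matrix.fromBlocks
        ((Yᴴ * Y) ⊗ₖ (1 : Matrix (Fin n) (Fin n) ℂ) + F11)
        (F12 + (Z * Yᴴ + χ • (Yᴴ * Zᴴ)) ⊗ₖ (1 : Matrix (Fin n) (Fin n) ℂ))
        (-F12ᴴ - (Zᴴ * Y + (starRingEnd ℂ χ) • (Y * Z))
            ⊗ₖ (1 : Matrix (Fin n) (Fin n) ℂ))
        ((Y * Yᴴ) ⊗ₖ (1 : Matrix (Fin n) (Fin n) ℂ) + F11ᴴ)) :
    h = Matrix.fromBlocks
        (Z ⊗ₖ (1 : Matrix (Fin n) (Fin n) ℂ)) (-(Yᴴ ⊗ₖ (1 : Matrix (Fin n) (Fin n) ℂ)))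
        (Y ⊗ₖ (1 : Matrix (Fin n) (Fin n) ℂ)) (Zᴴ ⊗ₖ (1 : Matrix (Fin n) (Fin n) ℂ))
      * Matrix.fromBlocks
        K11 (Yᴴ ⊗ₖ (1 : Matrix (Fin n) (Fin n) ℂ))
        (-(Y ⊗ₖ (1 : Matrix (Fin n) (Fin n) ℂ))) K11ᴴ
    ∧ h.det = (Matrix.fromBlocks Z (-Yᴴ) Y Zᴴ).det ^ n
        * (Matrix.fromBlocks
            K11 (Yᴴ ⊗ₖ (1 : Matrix (Fin n) (Fin n) ℂ))
            (-(Y ⊗ₖ (1 : Matrix (Fin n) (Fin n) ℂ))) K11ᴴ).det := by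
  have hfact : h = Matrix.fromBlocks
        (Z ⊗ₖ (1 : Matrix (Fin n) (Fin n) ℂ)) (-(Yᴴ ⊗ₖ (1 : Matrix (Fin n) (Fin n) ℂ)))
        (Y ⊗ₖ (1 : Matrix (Fin n) (Fin n) ℂ)) (Zᴴ ⊗ₖ (1 : Matrix (Fin n) (Fin n) ℂ))
      * Matrix.fromBlocks
        K11 (Yᴴ ⊗ₖ (1 : Matrix (Fin n) (Fin n) ℂ))
        (-(Y ⊗ₖ (1 : Matrix (Fin n) (Fin n) ℂ))) K11ᴴ := by
    subst hh hF11 hF12 hK11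
    rw [Matrix.fromBlocks_multiply, Matrix.fromBlocks_inj]
    refine ⟨?_, ?_, ?_, ?_⟩ <;>
    · simp only [pow_two, starRingEnd_apply, Matrix.conjTranspose_sub,
        Matrix.conjTranspose_add, Matrix.conjTranspose_neg, Matrix.conjTranspose_smul,
        Matrix.conjTranspose_mul, Matrix.conjTranspose_one, Matrix.conjTranspose_conjTranspose,
        conjT_kron, star_star, Matrix.mul_add, Matrix.add_mul, Matrix.mul_sub, Matrix.sub_mul,
        Matrix.neg_mul, Matrix.mul_neg, smul_mul_assoc, mul_smul_comm,
        Matrix.add_kronecker, Matrix.kronecker_add, Matrix.smul_kronecker,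
        Matrix.kronecker_smul, neg_kron, kron_neg, one_mul, mul_one]
      simp only [← Matrix.mul_kronecker_mul, Matrix.one_mul, Matrix.mul_one, one_mul, mul_one]
      module
  refine ⟨hfact, ?_⟩
  rw [hfact, Matrix.det_mul, ← neg_kron, det_fromBlocks_kron Z (-Yᴴ) Y Zᴴ]
end
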